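/- If L : H → G is a surjective bounded linear operator and Υ : H → H is a strongly monotone self-adjoint bounded linear operator, then L Υ L* : G → G is strongly monotone, hence invertible; and with Σ := (L Υ L*)⁻¹, the operator V(x,u) = (Υ⁻¹x − L*u, Σ⁻¹u − Lx) has closed range. -/

import Mathlib

open RealInnerProductSpace

/-- The pair `(x, u)` regarded as an element of the Hilbert direct sum `H ⊕ G`. -/
noncomputable def pd {H G : Type*} (x : H) (u : G) : WithLp 2 (H × G) :=
  (WithLp.equiv 2 (H × G)).symm (x, u)

set_option maxHeartbeats 1000000 in
/-- If `L` is surjective and `Υ` strongly monotone self-adjoint, then `LΥL*` is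
strongly monotone, hence invertible; and with `Σ := (LΥL*)⁻¹` (so `Σ⁻¹ = LΥL*`),
the operator `V(x,u) = (Υ⁻¹x − L*u, Σ⁻¹u − Lx)` has closed range. -/
theorem stmt_8 {H G : Type*} [NormedAddCommGroup H] [InnerProductSpace ℝ H] [CompleteSpace H]
    [NormedAddCommGroup G] [InnerProductSpace ℝ G] [CompleteSpace G]
    (L : H →L[ℝ] G) (hL : Function.Surjective L)
    (Ups UpsI : H →L[ℝ] H) (τ : ℝ) (hτ : 0 < τ)
    (hUsa : ∀ x y : H, ⟪Ups x, y⟫ = ⟪x, Ups y⟫)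
    (hUsm : ∀ x : H, τ * ‖x‖ ^ 2 ≤ ⟪Ups x, x⟫)
    (hUinv : Ups.comp UpsI = ContinuousLinearMap.id ℝ H ∧
      UpsI.comp Ups = ContinuousLinearMap.id ℝ H)
    (V : WithLp 2 (H × G) →L[ℝ] WithLp 2 (H × G))
    (hV : ∀ (x : H) (u : G),
      V (pd x u) = pd (UpsI x - ContinuousLinearMap.adjoint L u)
        (L (Ups (ContinuousLinearMap.adjoint L u)) - L x)) :
    (∃ c > (0:ℝ), ∀ u : G,
      c * ‖u‖ ^ 2 ≤ ⟪L (Ups (ContinuousLinearMap.adjoint L u)), u⟫) ∧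
    (∃ T : G →L[ℝ] G,
      (L.comp (Ups.comp (ContinuousLinearMap.adjoint L))).comp T =
        ContinuousLinearMap.id ℝ G ∧
      T.comp (L.comp (Ups.comp (ContinuousLinearMap.adjoint L))) =
        ContinuousLinearMap.id ℝ G) ∧
    IsClosed (Set.range V) := by
  obtain ⟨C, Cpos, hC⟩ := ContinuousLinearMap.exists_preimage_norm_le L hL
  set L' := ContinuousLinearMap.adjoint L with hL'
  -- lower bound on ‖L* u‖
  have hlow : ∀ u : G, ‖u‖ ≤ C * ‖L' u‖ := by
    intro u
    obtain ⟨x, hx, hxn⟩ := hC u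
    have h1 : ‖u‖ ^ 2 = ⟪L x, u⟫ := by rw [hx, real_inner_self_eq_norm_sq]
    have h2 : ⟪L x, u⟫ = ⟪x, L' u⟫ := by
      rw [hL', ContinuousLinearMap.adjoint_inner_right]
    have h3 : ⟪x, L' u⟫ ≤ ‖x‖ * ‖L' u‖ := real_inner_le_norm _ _
    have h4 : ‖x‖ * ‖L' u‖ ≤ (C * ‖u‖) * ‖L' u‖ :=
      mul_le_mul_of_nonneg_right hxn (norm_nonneg _)
    have h5 : ‖u‖ ^ 2 ≤ C * ‖u‖ * ‖L' u‖ := by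
      rw [h1, h2]; exact h3.trans h4
    rcases eq_or_lt_of_le (norm_nonneg u) with h | h
    · simp [← h]; positivity
    · have := (mul_le_mul_iff_of_pos_right h).mp (by nlinarith : ‖u‖ * ‖u‖ ≤ (C * ‖L' u‖) * ‖u‖)
      exact this
  -- strong monotonicity of S = L Υ L*
  have key : ∀ u : G, (τ / C ^ 2) * ‖u‖ ^ 2 ≤ ⟪L (Ups (L' u)), u⟫ := by
    intro u
    have h2 : ⟪L (Ups (L' u)), u⟫ = ⟪Ups (L' u), L' u⟫ := by
      rw [← ContinuousLinearMap.adjoint_inner_right L, ← hL']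
    have h3 := hUsm (L' u)
    have h4 : ‖u‖ ^ 2 ≤ C ^ 2 * ‖L' u‖ ^ 2 := by
      have := hlow u
      nlinarith [norm_nonneg u, norm_nonneg (L' u)]
    have : (τ / C ^ 2) * ‖u‖ ^ 2 ≤ τ * ‖L' u‖ ^ 2 := by
      rw [div_mul_eq_mul_div, div_le_iff₀ (by positivity)]
      nlinarith
    rw [h2]; exact this.trans h3
  have cpos : (0:ℝ) < τ / C ^ 2 := by positivity
  refine ⟨⟨τ / C ^ 2, cpos, key⟩, ?_, ?_⟩
  · -- invertibility
    set S := L.comp (Ups.comp L') with hS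
    have hSapp : ∀ u, S u = L (Ups (L' u)) := fun u => rfl
    have hbound : ∀ u : G, ‖u‖ ≤ (⟨(τ / C ^ 2)⁻¹, by positivity⟩ : NNReal) * ‖S u‖ := by
      intro u
      have h1 := key u
      have h2 : ⟪L (Ups (L' u)), u⟫ ≤ ‖S u‖ * ‖u‖ := by
        rw [← hSapp]; exact real_inner_le_norm _ _
      have h3 : (τ / C ^ 2) * ‖u‖ ^ 2 ≤ ‖S u‖ * ‖u‖ := h1.trans h2
      rcases eq_or_lt_of_le (norm_nonneg u) with h | h
      · simp [← h]; positivity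
      · have h4 : (τ / C ^ 2) * ‖u‖ ≤ ‖S u‖ :=
          le_of_mul_le_mul_right (by nlinarith) h
        show ‖u‖ ≤ (τ / C ^ 2)⁻¹ * ‖S u‖
        have h5 := mul_le_mul_of_nonneg_left h4 (inv_pos.mpr cpos).le
        calc ‖u‖ = (τ / C ^ 2)⁻¹ * (τ / C ^ 2 * ‖u‖) := by field_simp
        _ ≤ (τ / C ^ 2)⁻¹ * ‖S u‖ := h5
    have hanti := ContinuousLinearMap.antilipschitz_of_bound S hbound
    have hker : S.ker = ⊥ :=
      by
        ext x; simp only [LinearMap.mem_ker, Submodule.mem_bot]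
        exact ⟨fun hx => hanti.injective (hx.trans (map_zero S).symm), fun hx => hx ▸ map_zero S⟩
    have hclosed : IsClosed (S.range : Set G) := by
      have : (S.range : Set G) = Set.range S := by
        ext x; simp [LinearMap.mem_range]
      rw [this]
      exact hanti.isClosed_range S.uniformContinuous
    have : CompleteSpace (S.range) := hclosed.completeSpace_coe
    have hrange : S.range = ⊤ := by
      rw [← Submodule.orthogonal_eq_bot_iff]
      rw [Submodule.eq_bot_iff]
      intro v hv
      have h0 : ⟪S v, v⟫ = 0 := by
        exact (Submodule.mem_orthogonal _ v).mp hv (S v) ⟨v, rfl⟩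
      have := key v
      rw [← hSapp] at this
      rw [h0] at this
      have : ‖v‖ ^ 2 ≤ 0 := by nlinarith
      have : ‖v‖ = 0 := by nlinarith [norm_nonneg v]
      exact norm_eq_zero.mp this
    set e := ContinuousLinearEquiv.ofBijective S hker hrange with he
    refine ⟨e.symm.toContinuousLinearMap, ?_, ?_⟩
    · ext u
      simp only [ContinuousLinearMap.comp_apply, ContinuousLinearMap.id_apply,
        ContinuousLinearEquiv.coe_coe]
      have : S (e.symm u) = e (e.symm u) := by
        rw [he]; rfl
      rw [this, e.apply_symm_apply]
    · ext u
      simp only [ContinuousLinearMap.comp_apply, ContinuousLinearMap.id_apply,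
        ContinuousLinearEquiv.coe_coe]
      have : S u = e u := by rw [he]; rfl
      rw [this, e.symm_apply_apply]
  · -- closed range of V
    set E := WithLp.prodContinuousLinearEquiv 2 ℝ H G with hE
    set W : WithLp 2 (H × G) →L[ℝ] G :=
      ((L.comp Ups).comp (ContinuousLinearMap.fst ℝ H G) +
        ContinuousLinearMap.snd ℝ H G).comp (E : WithLp 2 (H × G) →L[ℝ] H × G) with hW
    have hWapp : ∀ z : WithLp 2 (H × G), W z = L (Ups (E z).1) + (E z).2 := fun z => rfl
    have hUU : ∀ a : H, Ups (UpsI a) = a := fun a =>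
      DFunLike.congr_fun hUinv.1 a
    have hUU' : ∀ a : H, UpsI (Ups a) = a := fun a =>
      DFunLike.congr_fun hUinv.2 a
    have hpd : ∀ z : WithLp 2 (H × G), pd (E z).1 (E z).2 = z := fun z => rfl
    have hrange : Set.range V = W ⁻¹' {0} := by
      ext z
      constructor
      · rintro ⟨y, rfl⟩
        have hy : V y = pd (UpsI (E y).1 - L' (E y).2)
            (L (Ups (L' (E y).2)) - L (E y).1) := by
          conv_lhs => rw [← hpd y]
          rw [hV]
        simp only [Set.mem_preimage, Set.mem_singleton_iff]
        rw [hWapp, hy]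
        have h1 : (E (pd (UpsI (E y).1 - L' (E y).2)
            (L (Ups (L' (E y).2)) - L (E y).1))).1 = UpsI (E y).1 - L' (E y).2 := rfl
        have h2 : (E (pd (UpsI (E y).1 - L' (E y).2)
            (L (Ups (L' (E y).2)) - L (E y).1))).2
            = L (Ups (L' (E y).2)) - L (E y).1 := rfl
        rw [h1, h2, map_sub Ups, hUU, map_sub L]
        abel
      · intro hz
        simp only [Set.mem_preimage, Set.mem_singleton_iff] at hz
        rw [hWapp] at hz
        refine ⟨pd (Ups (E z).1) 0, ?_⟩
        rw [hV]
        have h0 : L' (0:G) = 0 := map_zero _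
        rw [h0, hUU']
        have h2 : L (Ups (0:H)) = 0 := by rw [map_zero, map_zero]
        rw [sub_zero, map_zero, map_zero, zero_sub]
        have hz2 : (E z).2 = - L (Ups (E z).1) := by
          rw [eq_neg_iff_add_eq_zero, add_comm]; exact hz
        rw [← hz2, hpd]
    rw [hrange]
    exact IsClosed.preimage W.continuous isClosed_singleton
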